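/- There is a universal constant c such that for all integers p, q ≥ 2, the pq × pq grid graph (the Cartesian box product of two path graphs on pq vertices each) admits a (⌈c · p² · (q + log₂ p)⌉, ⌈c · (q + log₂ p)⌉, 1)-contraction sequence. (Together with the treewidth bound for contraction sequences, this shows the bound tw(G) = O(√(ab)·c) for graphs with an (a,b,c)-contraction sequence is asymptotically optimal.) -/

import Mathlib

open scoped BigOperators

set_option linter.unusedSectionVars false

noncomputable section

namespace Paper

variable {V : Type}

def IsPartition (Ps : Set (Set V)) : Prop :=
  (∀ v : V, ∃ P ∈ Ps, v ∈ P) ∧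
  (∀ P ∈ Ps, ∀ Q ∈ Ps, P ≠ Q → Disjoint P Q) ∧
  (∀ P ∈ Ps, P.Nonempty)

def quotGraph (G : SimpleGraph V) (Ps : Set (Set V)) : SimpleGraph {D // D ∈ Ps} where
  Adj P Q := P ≠ Q ∧ ∃ u ∈ P.1, ∃ v ∈ Q.1, G.Adj u v
  symm := by
    constructor
    rintro P Q ⟨hne, u, hu, x, hx, hadj⟩
    exact ⟨hne.symm, x, hx, u, hu, hadj.symm⟩
  loopless := by
    constructor
    rintro P ⟨hne, -⟩
    exact hne rfl

structure ContractionSeq [Fintype V] (G : SimpleGraph V) (a b c : ℕ) where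
  Ps : ℕ → Set (Set V)
  con : ℕ → Set (Set V)
  ispart : ∀ i ≤ b, IsPartition (Ps i)
  bot : Ps 0 = {P | ∃ v : V, P = {v}}
  top : Ps b = {Set.univ}
  refines : ∀ i < b, ∀ P ∈ Ps i, ∃ Q ∈ Ps (i + 1), P ⊆ Q
  con_sub : ∀ i < b, con (i + 1) ⊆ Ps (i + 1)
  old_parts : ∀ i < b, ∀ P ∈ Ps (i + 1), P ∉ con (i + 1) → P ∈ Ps i
  contracted : ∀ i < b, ∀ P ∈ con (i + 1),
    ∃ D₀ : Set V, ∃ h₀ : D₀ ∈ ({D | D ∈ Ps i ∧ D ⊆ P} : Set (Set V)),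
      ∀ D : Set V, ∀ hD : D ∈ ({D | D ∈ Ps i ∧ D ⊆ P} : Set (Set V)),
        ∃ wlk : (quotGraph G {D | D ∈ Ps i ∧ D ⊆ P}).Walk ⟨D₀, h₀⟩ ⟨D, hD⟩,
          wlk.length ≤ c
  count : ∑ i ∈ Finset.range b, (con (i + 1)).ncard ≤ a

namespace S14

/-! ### Generic fiber-partition machinery -/

variable {W α : Type}

/-- The fiber of `v` under `f`. -/
def fib (f : W → α) (v : W) : Set W := f ⁻¹' {f v}

lemma self_mem_fib (f : W → α) (v : W) : v ∈ fib f v := rfl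

lemma mem_fib {f : W → α} {v w : W} : w ∈ fib f v ↔ f w = f v := Iff.rfl

lemma fib_eq_of {f : W → α} {v w : W} (h : f v = f w) : fib f v = fib f w := by
  simp [fib, h]

lemma fib_eq_iff {f : W → α} {v w : W} : fib f v = fib f w ↔ f v = f w := by
  constructor
  · intro h
    have : v ∈ fib f w := h ▸ self_mem_fib f v
    exact this
  · exact fib_eq_of

/-- Partition into fibers. -/
def PsF (f : W → α) : Set (Set W) := {P | ∃ v, P = fib f v}

lemma fib_mem_PsF (f : W → α) (v : W) : fib f v ∈ PsF f := ⟨v, rfl⟩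

lemma isPartition_PsF (f : W → α) : IsPartition (PsF f) := by
  refine ⟨fun v => ⟨fib f v, fib_mem_PsF f v, self_mem_fib f v⟩, ?_, ?_⟩
  · rintro P ⟨v, rfl⟩ Q ⟨w, rfl⟩ hne
    rw [Set.disjoint_left]
    intro x hx hx'
    exact hne (fib_eq_of (hx.symm.trans hx'))
  · rintro P ⟨v, rfl⟩
    exact ⟨v, self_mem_fib f v⟩

lemma fib_subset_fib {f g : W → α} (h : ∀ u v, f u = f v → g u = g v) (v : W) :
    fib f v ⊆ fib g v := fun w hw => h w v hw

lemma exists_walk_of_eq_or_adj {β : Type} (G : SimpleGraph β) (a b : β)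
    (h : a = b ∨ G.Adj a b) : ∃ w : G.Walk a b, w.length ≤ 1 := by
  rcases h with rfl | h
  · exact ⟨.nil, by simp⟩
  · exact ⟨.cons h .nil, by simp⟩

/-! ### The grid construction -/

variable (p q : ℕ)

abbrev GV := Fin (p * q) × Fin (p * q)

def theG : SimpleGraph (GV p q) :=
  SimpleGraph.boxProd (SimpleGraph.pathGraph (p * q)) (SimpleGraph.pathGraph (p * q))

def L : ℕ := Nat.clog 2 p

def T1 : ℕ := 2 * q - 2

def T2 : ℕ := T1 q + L p

def T3 : ℕ := T2 p q + L p

/-- sum of residues -/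
def rs (v : GV p q) : ℕ := (v.1 : ℕ) % q + (v.2 : ℕ) % q

def lab (i : ℕ) (v : GV p q) : ℕ × ℕ :=
  if i ≤ T1 q then
    (if rs p q v ≤ i then (q * ((v.1 : ℕ) / q), q * ((v.2 : ℕ) / q))
     else ((v.1 : ℕ), (v.2 : ℕ)))
  else if i ≤ T2 p q then
    (q * (2 ^ (i - T1 q) * ((v.1 : ℕ) / q / 2 ^ (i - T1 q))), q * ((v.2 : ℕ) / q))
  else
    (0, q * (2 ^ (min (i - T2 p q) (L p)) * ((v.2 : ℕ) / q / 2 ^ (min (i - T2 p q) (L p)))))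

def labE (e : ℕ) (v : GV p q) : ℕ × ℕ :=
  (q * (2 ^ e * ((v.1 : ℕ) / q / 2 ^ e)), q * ((v.2 : ℕ) / q))

def labF (e : ℕ) (v : GV p q) : ℕ × ℕ :=
  (0, q * (2 ^ e * ((v.2 : ℕ) / q / 2 ^ e)))

variable {p q}

section Basic

variable (hp : 2 ≤ p) (hq : 2 ≤ q)
include hp hq

lemma hn : 0 < p * q := by positivity

lemma val_lt (x : Fin (p * q)) : (x : ℕ) < p * q := x.2

lemma div_lt_p (x : Fin (p * q)) : (x : ℕ) / q < p :=
  (Nat.div_lt_iff_lt_mul (by omega)).2 x.2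

lemma corner_lt {a : ℕ} (ha : a < p) : q * a < p * q := by
  have h1 : q * (a + 1) ≤ q * p := Nat.mul_le_mul_left q ha
  have h2 : q * (a + 1) = q * a + q := Nat.mul_succ q a
  have h3 : q * p = p * q := Nat.mul_comm q p
  omega

/-- corner vertex -/
def vtx (hp : 2 ≤ p) (hq : 2 ≤ q) {a b : ℕ} (ha : a < p) (hb : b < p) : GV p q :=
  (⟨q * a, corner_lt hp hq ha⟩, ⟨q * b, corner_lt hp hq hb⟩)

lemma p_le_pow : p ≤ 2 ^ L p := Nat.le_pow_clog (by norm_num) p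

lemma L_pos : 0 < L p := Nat.clog_pos (by norm_num) hp

end Basic

section Arith

lemma pred_div {x : ℕ} (hq0 : 0 < q) (hx : 0 < x % q) : (x - 1) / q = x / q := by
  have hmod : x % q < q := Nat.mod_lt x hq0
  conv_lhs => rw [← Nat.div_add_mod x q]
  rw [show q * (x / q) + x % q - 1 = q * (x / q) + (x % q - 1) by omega,
    Nat.mul_add_div hq0, Nat.div_eq_of_lt (show x % q - 1 < q by omega), Nat.add_zero]

lemma pred_mod {x : ℕ} (hq0 : 0 < q) (hx : 0 < x % q) : (x - 1) % q = x % q - 1 := by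
  have hmod : x % q < q := Nat.mod_lt x hq0
  conv_lhs => rw [← Nat.div_add_mod x q]
  rw [show q * (x / q) + x % q - 1 = q * (x / q) + (x % q - 1) by omega,
    Nat.mul_add_mod, Nat.mod_eq_of_lt (show x % q - 1 < q by omega)]

lemma qm_split {m : ℕ} (hq0 : 0 < q) (hm : 0 < m) :
    q * m - 1 = q * (m - 1) + (q - 1) := by
  have h : q * m = q * (m - 1) + q := by
    conv_lhs => rw [show m = (m - 1) + 1 by omega]
    rw [Nat.mul_add, Nat.mul_one]
  omega

lemma qm_pred_div {m : ℕ} (hq0 : 0 < q) (hm : 0 < m) : (q * m - 1) / q = m - 1 := by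
  rw [qm_split hq0 hm, Nat.mul_add_div hq0, Nat.div_eq_of_lt (by omega), Nat.add_zero]

lemma div_pow_succ (x e : ℕ) : x / 2 ^ (e + 1) = x / 2 ^ e / 2 := by
  rw [Nat.div_div_eq_div_mul, ← pow_succ]

lemma mul_left_cancel_q {a b : ℕ} (hq0 : 0 < q) (h : q * a = q * b) : a = b :=
  Nat.eq_of_mul_eq_mul_left hq0 h

end Arith

section Lab

variable (hp : 2 ≤ p) (hq : 2 ≤ q)

lemma lab_stage1 {i : ℕ} (hi : i ≤ T1 q) (v : GV p q) :
    lab p q i v = if rs p q v ≤ i then (q * ((v.1 : ℕ) / q), q * ((v.2 : ℕ) / q))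
      else ((v.1 : ℕ), (v.2 : ℕ)) := by
  rw [lab, if_pos hi]

include hq in
lemma rs_le (v : GV p q) : rs p q v ≤ T1 q := by
  have h1 : (v.1 : ℕ) % q < q := Nat.mod_lt _ (by omega)
  have h2 : (v.2 : ℕ) % q < q := Nat.mod_lt _ (by omega)
  unfold rs T1; omega

include hq in
lemma lab_zero (v : GV p q) : lab p q 0 v = ((v.1 : ℕ), (v.2 : ℕ)) := by
  rw [lab_stage1 (by unfold T1; omega)]
  split
  · next h =>
    have h1 : (v.1 : ℕ) % q = 0 := by unfold rs at h; omega
    have h2 : (v.2 : ℕ) % q = 0 := by unfold rs at h; omega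
    rw [Nat.mul_div_cancel' (Nat.dvd_of_mod_eq_zero h1),
      Nat.mul_div_cancel' (Nat.dvd_of_mod_eq_zero h2)]
  · rfl

include hq in
lemma lab_eq_labE {i : ℕ} (h1 : T1 q ≤ i) (h2 : i ≤ T2 p q) (v : GV p q) :
    lab p q i v = labE p q (i - T1 q) v := by
  rcases Nat.eq_or_lt_of_le h1 with rfl | hlt
  · rw [lab_stage1 le_rfl, if_pos (rs_le hq v), Nat.sub_self]
    simp [labE]
  · rw [lab, if_neg (by omega), if_pos h2]
    rfl

include hp hq in
lemma lab_eq_labF {i : ℕ} (h1 : T2 p q ≤ i) (v : GV p q) :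
    lab p q i v = labF p q (min (i - T2 p q) (L p)) v := by
  rcases Nat.eq_or_lt_of_le h1 with rfl | hlt
  · have hd : (v.1 : ℕ) / q / 2 ^ (L p) = 0 :=
      Nat.div_eq_of_lt (lt_of_lt_of_le (div_lt_p hp hq v.1) (p_le_pow hp hq))
    rw [lab_eq_labE hq (by unfold T2; omega) le_rfl]
    have hL : T2 p q - T1 q = L p := by unfold T2; omega
    rw [hL, Nat.sub_self]
    simp [labE, labF, hd]
  · rw [lab, if_neg (by unfold T2 T1 at *; omega), if_neg (by omega)]
    rfl

end Lab

section Coarsen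

variable (hp : 2 ≤ p) (hq : 2 ≤ q)

include hq in
lemma labE_coarsen {e : ℕ} {u v : GV p q} (h : labE p q e u = labE p q e v) :
    labE p q (e + 1) u = labE p q (e + 1) v := by
  unfold labE at *
  obtain ⟨h1, h2⟩ := Prod.mk.injEq .. ▸ h
  have h1' : (u.1 : ℕ) / q / 2 ^ e = (v.1 : ℕ) / q / 2 ^ e :=
    Nat.eq_of_mul_eq_mul_left (by positivity) (mul_left_cancel_q (by omega) h1)
  rw [div_pow_succ, div_pow_succ, h1', h2]

include hq in
lemma labF_coarsen {e : ℕ} {u v : GV p q} (h : labF p q e u = labF p q e v) :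
    labF p q (e + 1) u = labF p q (e + 1) v := by
  unfold labF at *
  obtain ⟨h1, h2⟩ := Prod.mk.injEq .. ▸ h
  have h2' : (u.2 : ℕ) / q / 2 ^ e = (v.2 : ℕ) / q / 2 ^ e :=
    Nat.eq_of_mul_eq_mul_left (by positivity) (mul_left_cancel_q (by omega) h2)
  rw [div_pow_succ, div_pow_succ, h2']

include hp hq in
lemma lab_stable {i : ℕ} (h : T3 p q ≤ i) (v : GV p q) :
    lab p q (i + 1) v = lab p q i v := by
  have hT : T2 p q ≤ i := le_trans (by unfold T3; omega) h
  rw [lab_eq_labF hp hq hT, lab_eq_labF hp hq (by omega)]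
  have h1 : min (i - T2 p q) (L p) = L p := by
    have : L p ≤ i - T2 p q := by unfold T3 at h; omega
    omega
  have h2 : min (i + 1 - T2 p q) (L p) = L p := by
    have : L p ≤ i + 1 - T2 p q := by unfold T3 at h; omega
    omega
  rw [h1, h2]

include hp hq in
lemma coarsen {i : ℕ} {u v : GV p q} (h : lab p q i u = lab p q i v) :
    lab p q (i + 1) u = lab p q (i + 1) v := by
  rcases le_or_gt (i + 1) (T1 q) with hi | hi
  · -- stage 1
    rw [lab_stage1 (by omega) u, lab_stage1 (by omega) v] at h
    rw [lab_stage1 hi u, lab_stage1 hi v]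
    by_cases hu : rs p q u ≤ i
    · by_cases hv : rs p q v ≤ i
      · rw [if_pos hu, if_pos hv] at h
        rw [if_pos (by omega), if_pos (by omega)]
        exact h
      · -- u corner label, v own coords: v is a corner, contradiction with rs v > i
        rw [if_pos hu, if_neg hv] at h
        obtain ⟨h1, h2⟩ := Prod.mk.injEq .. ▸ h
        exfalso
        have e1 : (v.1 : ℕ) % q = 0 := by rw [← h1]; exact Nat.mul_mod_right q _
        have e2 : (v.2 : ℕ) % q = 0 := by rw [← h2]; exact Nat.mul_mod_right q _
        unfold rs at hv; omega
    · by_cases hv : rs p q v ≤ i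
      · rw [if_neg hu, if_pos hv] at h
        obtain ⟨h1, h2⟩ := Prod.mk.injEq .. ▸ h
        exfalso
        have e1 : (u.1 : ℕ) % q = 0 := by rw [h1]; exact Nat.mul_mod_right q _
        have e2 : (u.2 : ℕ) % q = 0 := by rw [h2]; exact Nat.mul_mod_right q _
        unfold rs at hu; omega
      · rw [if_neg hu, if_neg hv] at h
        obtain ⟨h1, h2⟩ := Prod.mk.injEq .. ▸ h
        have hrs : rs p q u = rs p q v := by unfold rs; rw [h1, h2]
        rw [h1, h2, hrs]
  · rcases le_or_gt (i + 1) (T2 p q) with hi2 | hi2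
    · -- stage 2
      have hT1 : T1 q ≤ i := by omega
      rw [lab_eq_labE hq hT1 (by omega) u, lab_eq_labE hq hT1 (by omega) v] at h
      rw [lab_eq_labE hq (by omega) hi2 u, lab_eq_labE hq (by omega) hi2 v]
      have hstep : i + 1 - T1 q = (i - T1 q) + 1 := by omega
      rw [hstep]
      exact labE_coarsen hq h
    · -- stage 3
      have hT2 : T2 p q ≤ i := by unfold T2 T1 at *; omega
      rw [lab_eq_labF hp hq hT2 u, lab_eq_labF hp hq hT2 v] at h
      rw [lab_eq_labF hp hq (by omega) u, lab_eq_labF hp hq (by omega) v]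
      rcases le_or_gt (L p) (i - T2 p q) with hL | hL
      · have h1 : min (i - T2 p q) (L p) = L p := by omega
        have h2 : min (i + 1 - T2 p q) (L p) = L p := by omega
        rw [h1] at h; rw [h2]; exact h
      · have h1 : min (i - T2 p q) (L p) = i - T2 p q := by omega
        have h2 : min (i + 1 - T2 p q) (L p) = (i - T2 p q) + 1 := by omega
        rw [h1] at h; rw [h2]
        exact labF_coarsen hq h

include hp hq in
lemma coarsen_le {i j : ℕ} (hij : i ≤ j) {u v : GV p q} (h : lab p q i u = lab p q i v) :
    lab p q j u = lab p q j v := by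
  induction j with
  | zero =>
    obtain rfl := Nat.le_zero.mp hij
    exact h
  | succ k ih =>
    rcases Nat.eq_or_lt_of_le hij with rfl | hlt
    · exact h
    · exact coarsen hp hq (ih (by omega))

end Coarsen

section Fibers

variable (hp : 2 ≤ p) (hq : 2 ≤ q)

include hq in
lemma fib_singleton_stage1 {i : ℕ} (hi : i ≤ T1 q) {v : GV p q} (hv : i < rs p q v) :
    fib (lab p q i) v = {v} := by
  ext w
  simp only [mem_fib, Set.mem_singleton_iff]
  constructor
  · intro h
    rw [lab_stage1 hi v, if_neg (show ¬ rs p q v ≤ i by omega), lab_stage1 hi w] at h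
    split at h
    · exfalso
      obtain ⟨h1, h2⟩ := Prod.mk.injEq .. ▸ h
      have e1 : (v.1 : ℕ) % q = 0 := by rw [← h1]; exact Nat.mul_mod_right q _
      have e2 : (v.2 : ℕ) % q = 0 := by rw [← h2]; exact Nat.mul_mod_right q _
      unfold rs at hv; omega
    · obtain ⟨h1, h2⟩ := Prod.mk.injEq .. ▸ h
      exact Prod.ext (Fin.val_inj.mp h1) (Fin.val_inj.mp h2)
  · rintro rfl; rfl

include hp hq in
lemma corner_of_new {i : ℕ} {v : GV p q}
    (hP : fib (lab p q (i + 1)) v ∉ PsF (lab p q i)) :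
    ∃ a b : ℕ, a < p ∧ b < p ∧ lab p q (i + 1) v = (q * a, q * b) := by
  rcases le_or_gt (i + 1) (T1 q) with hi | hi
  · by_cases hrs : rs p q v ≤ i + 1
    · refine ⟨(v.1 : ℕ) / q, (v.2 : ℕ) / q, div_lt_p hp hq v.1, div_lt_p hp hq v.2, ?_⟩
      rw [lab_stage1 hi v, if_pos hrs]
    · exfalso
      apply hP
      refine ⟨v, ?_⟩
      rw [fib_singleton_stage1 hq hi (show i + 1 < rs p q v by omega),
        fib_singleton_stage1 hq (show i ≤ T1 q by omega) (show i < rs p q v by omega)]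
  · rcases le_or_gt (i + 1) (T2 p q) with hi2 | hi2
    · refine ⟨2 ^ (i + 1 - T1 q) * ((v.1 : ℕ) / q / 2 ^ (i + 1 - T1 q)), (v.2 : ℕ) / q,
        lt_of_le_of_lt (Nat.mul_div_le _ _) (div_lt_p hp hq v.1), div_lt_p hp hq v.2, ?_⟩
      rw [lab_eq_labE hq (by omega) hi2]
      rfl
    · refine ⟨0, 2 ^ (min (i + 1 - T2 p q) (L p)) *
          ((v.2 : ℕ) / q / 2 ^ (min (i + 1 - T2 p q) (L p))),
        by omega, lt_of_le_of_lt (Nat.mul_div_le _ _) (div_lt_p hp hq v.2), ?_⟩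
      rw [lab_eq_labF hp hq (by omega)]
      simp [labF]

end Fibers

section Adj

lemma grid_adj_x {x1 x2 y1 y2 : Fin (p * q)} (h : (x1 : ℕ) + 1 = (x2 : ℕ)) (hy : y1 = y2) :
    (theG p q).Adj (x1, y1) (x2, y2) :=
  SimpleGraph.boxProd_adj.mpr (Or.inl ⟨SimpleGraph.pathGraph_adj.mpr (Or.inl h), hy⟩)

lemma grid_adj_y {x1 x2 y1 y2 : Fin (p * q)} (h : (y1 : ℕ) + 1 = (y2 : ℕ)) (hx : x1 = x2) :
    (theG p q).Adj (x1, y1) (x2, y2) :=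
  SimpleGraph.boxProd_adj.mpr (Or.inr ⟨SimpleGraph.pathGraph_adj.mpr (Or.inl h), hx⟩)

end Adj

section Star

variable (hp : 2 ≤ p) (hq : 2 ≤ q)

include hq in
lemma lab_stage1_mk {t A B : ℕ} (ht : t ≤ T1 q) (hA : q * A < p * q) (hB : q * B < p * q) :
    lab p q t ((⟨q * A, hA⟩ : Fin (p * q)), (⟨q * B, hB⟩ : Fin (p * q))) = (q * A, q * B) := by
  have h0 : rs p q ((⟨q * A, hA⟩ : Fin (p * q)), (⟨q * B, hB⟩ : Fin (p * q))) = 0 := by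
    show q * A % q + q * B % q = 0
    rw [Nat.mul_mod_right, Nat.mul_mod_right]
  rw [lab_stage1 ht, if_pos (by omega)]
  show (q * (q * A / q), q * (q * B / q)) = _
  rw [Nat.mul_div_cancel_left A (by omega), Nat.mul_div_cancel_left B (by omega)]

include hq in
lemma labE_mk {e A B : ℕ} (hA : q * A < p * q) (hB : q * B < p * q) :
    labE p q e ((⟨q * A, hA⟩ : Fin (p * q)), (⟨q * B, hB⟩ : Fin (p * q)))
      = (q * (2 ^ e * (A / 2 ^ e)), q * B) := by
  show (q * (2 ^ e * (q * A / q / 2 ^ e)), q * (q * B / q)) = _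
  rw [Nat.mul_div_cancel_left A (by omega), Nat.mul_div_cancel_left B (by omega)]

include hq in
lemma labF_mk {e B : ℕ} (x : Fin (p * q)) (hB : q * B < p * q) :
    labF p q e (x, (⟨q * B, hB⟩ : Fin (p * q))) = (0, q * (2 ^ e * (B / 2 ^ e))) := by
  show (0, q * (2 ^ e * (q * B / q / 2 ^ e))) = _
  rw [Nat.mul_div_cancel_left B (by omega)]

include hq in
lemma stage1_dest {t : ℕ} (ht : t ≤ T1 q) {u : GV p q} {a b : ℕ}
    (h : lab p q t u = (q * a, q * b)) :
    rs p q u ≤ t ∧ (u.1 : ℕ) / q = a ∧ (u.2 : ℕ) / q = b := by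
  rw [lab_stage1 ht] at h
  split at h
  · next hrs =>
    obtain ⟨h1, h2⟩ := Prod.mk.injEq .. ▸ h
    exact ⟨hrs, Nat.eq_of_mul_eq_mul_left (by omega) h1,
      Nat.eq_of_mul_eq_mul_left (by omega) h2⟩
  · next hrs =>
    obtain ⟨h1, h2⟩ := Prod.mk.injEq .. ▸ h
    exfalso
    have e1 : (u.1 : ℕ) % q = 0 := by rw [h1]; exact Nat.mul_mod_right q _
    have e2 : (u.2 : ℕ) % q = 0 := by rw [h2]; exact Nat.mul_mod_right q _
    unfold rs at hrs; omega

include hp hq in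
lemma star {i : ℕ} {v : GV p q}
    (hP : fib (lab p q (i + 1)) v ∉ PsF (lab p q i)) :
    ∃ u₀ : GV p q, lab p q (i + 1) u₀ = lab p q (i + 1) v ∧
      ∀ u : GV p q, lab p q (i + 1) u = lab p q (i + 1) v →
        lab p q i u = lab p q i u₀ ∨
        (lab p q i u ≠ lab p q i u₀ ∧ ∃ w w' : GV p q,
          lab p q i w = lab p q i u₀ ∧ lab p q i w' = lab p q i u ∧ (theG p q).Adj w w') := by
  have hq0 : 0 < q := by omega
  rcases le_or_gt (i + 1) (T1 q) with hi | hi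
  · -- Stage 1 : growing balls inside blocks
    have hrs : rs p q v ≤ i + 1 := by
      by_contra hrs
      apply hP
      refine ⟨v, ?_⟩
      rw [fib_singleton_stage1 hq hi (by omega),
        fib_singleton_stage1 hq (show i ≤ T1 q by omega) (by omega)]
    set a := (v.1 : ℕ) / q with hadef
    set b := (v.2 : ℕ) / q with hbdef
    have ha : q * a < p * q := corner_lt hp hq (div_lt_p hp hq v.1)
    have hb : q * b < p * q := corner_lt hp hq (div_lt_p hp hq v.2)
    refine ⟨((⟨q * a, ha⟩ : Fin (p * q)), (⟨q * b, hb⟩ : Fin (p * q))), ?_, ?_⟩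
    · rw [lab_stage1_mk hq hi ha hb, lab_stage1 hi, if_pos hrs]
    · intro u hu
      rw [lab_stage1 hi v, if_pos hrs] at hu
      obtain ⟨hurs, hua, hub⟩ := stage1_dest hq hi hu
      rw [lab_stage1_mk hq (show i ≤ T1 q by omega) ha hb]
      rcases le_or_gt (rs p q u) i with hri | hri
      · left
        rw [lab_stage1 (show i ≤ T1 q by omega), if_pos hri, hua, hub]
      · right
        have hrsu : rs p q u = i + 1 := by omega
        constructor
        · rw [lab_stage1 (show i ≤ T1 q by omega), if_neg (by omega)]
          intro hcon
          obtain ⟨h1, h2⟩ := Prod.mk.injEq .. ▸ hcon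
          have e1 : (u.1 : ℕ) % q = 0 := by rw [h1]; exact Nat.mul_mod_right q _
          have e2 : (u.2 : ℕ) % q = 0 := by rw [h2]; exact Nat.mul_mod_right q _
          unfold rs at hrsu; omega
        · rcases (Nat.eq_zero_or_pos ((u.1 : ℕ) % q)).symm with hx | hx
          · -- step left in x
            have hx1 : 0 < (u.1 : ℕ) := by
              rcases Nat.eq_zero_or_pos (u.1 : ℕ) with h0 | h0
              · rw [h0] at hx; simp at hx
              · exact h0
            refine ⟨((⟨(u.1 : ℕ) - 1, by omega⟩ : Fin (p * q)), u.2), u, ?_, rfl, ?_⟩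
            · have hrsw : rs p q ((⟨(u.1 : ℕ) - 1, by omega⟩ : Fin (p * q)), u.2) = i := by
                show ((u.1 : ℕ) - 1) % q + (u.2 : ℕ) % q = i
                rw [pred_mod hq0 hx]
                unfold rs at hrsu; omega
              rw [lab_stage1 (show i ≤ T1 q by omega), if_pos (by omega)]
              show (q * (((u.1 : ℕ) - 1) / q), q * ((u.2 : ℕ) / q)) = _
              rw [pred_div hq0 hx, hua, hub]
            · exact grid_adj_x (by simp; omega) rfl
          · have hy : 0 < (u.2 : ℕ) % q := by unfold rs at hrsu; omega
            have hy1 : 0 < (u.2 : ℕ) := by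
              rcases Nat.eq_zero_or_pos (u.2 : ℕ) with h0 | h0
              · rw [h0] at hy; simp at hy
              · exact h0
            refine ⟨(u.1, (⟨(u.2 : ℕ) - 1, by omega⟩ : Fin (p * q))), u, ?_, rfl, ?_⟩
            · have hrsw : rs p q (u.1, (⟨(u.2 : ℕ) - 1, by omega⟩ : Fin (p * q))) = i := by
                show (u.1 : ℕ) % q + ((u.2 : ℕ) - 1) % q = i
                rw [pred_mod hq0 hy]
                unfold rs at hrsu; omega
              rw [lab_stage1 (show i ≤ T1 q by omega), if_pos (by omega)]
              show (q * ((u.1 : ℕ) / q), q * (((u.2 : ℕ) - 1) / q)) = _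
              rw [pred_div hq0 hy, hua, hub]
            · exact grid_adj_y (by simp; omega) rfl
  · rcases le_or_gt (i + 1) (T2 p q) with hi2 | hi2
    · -- Stage 2 : dyadic merging of block rows (x direction)
      set e := i - T1 q with hedef
      have hpe : 0 < 2 ^ e := Nat.two_pow_pos e
      have hpe1 : 0 < 2 ^ (e + 1) := Nat.two_pow_pos (e + 1)
      have hEi : ∀ w, lab p q i w = labE p q e w := fun w =>
        lab_eq_labE hq (by omega) (by omega) w
      have hEi1 : ∀ w, lab p q (i + 1) w = labE p q (e + 1) w := by
        intro w
        rw [lab_eq_labE hq (by omega) hi2 w,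
          show i + 1 - T1 q = e + 1 from by omega]
      set a := (v.1 : ℕ) / q with hadef
      set b := (v.2 : ℕ) / q with hbdef
      set k := a / 2 ^ (e + 1) with hkdef
      set K := 2 ^ (e + 1) * k with hKdef
      have hKa : K ≤ a := Nat.mul_div_le a _
      have hKp : q * K < p * q := corner_lt hp hq (lt_of_le_of_lt hKa (div_lt_p hp hq v.1))
      have hbp : q * b < p * q := corner_lt hp hq (div_lt_p hp hq v.2)
      have hKk : K / 2 ^ (e + 1) = k := Nat.mul_div_cancel_left k hpe1
      have hK2 : K = 2 ^ e * (2 * k) := by rw [hKdef, pow_succ]; ring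
      have hKe : K / 2 ^ e = 2 * k := by rw [hK2]; exact Nat.mul_div_cancel_left _ hpe
      refine ⟨((⟨q * K, hKp⟩ : Fin (p * q)), (⟨q * b, hbp⟩ : Fin (p * q))), ?_, ?_⟩
      · rw [hEi1, hEi1, labE_mk hq, hKk]
        rfl
      · intro u hu
        rw [hEi1 u, hEi1 v] at hu
        obtain ⟨hu1, hu2⟩ := Prod.mk.injEq .. ▸ hu
        have hau : (u.1 : ℕ) / q / 2 ^ (e + 1) = k :=
          Nat.eq_of_mul_eq_mul_left hpe1 (Nat.eq_of_mul_eq_mul_left (by omega) hu1)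
        have hbu : (u.2 : ℕ) / q = b := Nat.eq_of_mul_eq_mul_left (by omega) hu2
        have hj : (u.1 : ℕ) / q / 2 ^ e / 2 = k := by rw [← div_pow_succ]; exact hau
        have hj2 : (u.1 : ℕ) / q / 2 ^ e = 2 * k ∨ (u.1 : ℕ) / q / 2 ^ e = 2 * k + 1 := by
          omega
        rw [hEi u, hEi ((⟨q * K, hKp⟩ : Fin (p * q)), (⟨q * b, hbp⟩ : Fin (p * q))),
          labE_mk hq, hKe]
        rcases hj2 with hj2 | hj2
        · left
          show (q * (2 ^ e * ((u.1 : ℕ) / q / 2 ^ e)), q * ((u.2 : ℕ) / q)) = _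
          rw [hj2, hbu]
        · right
          constructor
          · show (q * (2 ^ e * ((u.1 : ℕ) / q / 2 ^ e)), q * ((u.2 : ℕ) / q)) ≠ _
            rw [hj2, hbu]
            intro hcon
            obtain ⟨h1, h2⟩ := Prod.mk.injEq .. ▸ hcon
            have := Nat.eq_of_mul_eq_mul_left hpe
              (Nat.eq_of_mul_eq_mul_left (show 0 < q by omega) h1)
            omega
          · set m := 2 ^ e * (2 * k + 1) with hmdef
            have hm1 : 0 < m := by positivity
            have hma : m ≤ (u.1 : ℕ) / q := by
              rw [hmdef, ← hj2]
              exact Nat.mul_div_le _ _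
            have hqm : q * m ≤ (u.1 : ℕ) := le_trans
              (Nat.mul_le_mul_left q hma) (Nat.mul_div_le _ _)
            have hqmlt : q * m < p * q := lt_of_le_of_lt hqm (val_lt hp hq u.1)
            have hqm1 : 0 < q * m := by positivity
            have hmsplit : m - 1 = 2 ^ e * (2 * k) + (2 ^ e - 1) := by
              have : m = 2 ^ e * (2 * k) + 2 ^ e := by rw [hmdef, Nat.mul_add, Nat.mul_one]
              omega
            have hmd : (q * m - 1) / q = m - 1 := qm_pred_div (by omega) hm1
            have hmd2 : (m - 1) / 2 ^ e = 2 * k := by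
              rw [hmsplit, Nat.mul_add_div hpe, Nat.div_eq_of_lt (by omega), Nat.add_zero]
            refine ⟨((⟨q * m - 1, by omega⟩ : Fin (p * q)), (⟨q * b, hbp⟩ : Fin (p * q))),
              ((⟨q * m, hqmlt⟩ : Fin (p * q)), (⟨q * b, hbp⟩ : Fin (p * q))), ?_, ?_, ?_⟩
            · rw [hEi]
              show (q * (2 ^ e * ((q * m - 1) / q / 2 ^ e)), q * ((q * b) / q)) = _
              rw [hmd, hmd2, Nat.mul_div_cancel_left b (show 0 < q by omega)]
            · rw [hEi, labE_mk hq, Nat.mul_div_cancel_left (2 * k + 1) hpe]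
              show _ = (q * (2 ^ e * ((u.1 : ℕ) / q / 2 ^ e)), q * ((u.2 : ℕ) / q))
              rw [hj2, hbu]
            · exact grid_adj_x (by simp; omega) rfl
    · rcases le_or_gt (i + 1) (T3 p q) with hi3 | hi3
      · -- Stage 3 : dyadic merging of rows (y direction)
        have hLpos : 0 < L p := L_pos hp hq
        set e := i - T2 p q with hedef
        have heL : e < L p := by unfold T3 at hi3; omega
        have hpe : 0 < 2 ^ e := Nat.two_pow_pos e
        have hpe1 : 0 < 2 ^ (e + 1) := Nat.two_pow_pos (e + 1)
        have hFi : ∀ w, lab p q i w = labF p q e w := by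
          intro w
          rw [lab_eq_labF hp hq (by omega) w,
            show min (i - T2 p q) (L p) = e from by omega]
        have hFi1 : ∀ w, lab p q (i + 1) w = labF p q (e + 1) w := by
          intro w
          rw [lab_eq_labF hp hq (by omega) w,
            show min (i + 1 - T2 p q) (L p) = e + 1 from by omega]
        set b := (v.2 : ℕ) / q with hbdef
        set k := b / 2 ^ (e + 1) with hkdef
        set K := 2 ^ (e + 1) * k with hKdef
        have hKb : K ≤ b := Nat.mul_div_le b _
        have hKp : q * K < p * q := corner_lt hp hq (lt_of_le_of_lt hKb (div_lt_p hp hq v.2))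
        have hKk : K / 2 ^ (e + 1) = k := Nat.mul_div_cancel_left k hpe1
        have hK2 : K = 2 ^ e * (2 * k) := by rw [hKdef, pow_succ]; ring
        have hKe : K / 2 ^ e = 2 * k := by rw [hK2]; exact Nat.mul_div_cancel_left _ hpe
        have hx0 : (0 : ℕ) < p * q := hn hp hq
        refine ⟨((⟨0, hx0⟩ : Fin (p * q)), (⟨q * K, hKp⟩ : Fin (p * q))), ?_, ?_⟩
        · rw [hFi1, hFi1, labF_mk hq, hKk]
          rfl
        · intro u hu
          rw [hFi1 u, hFi1 v] at hu
          obtain ⟨hu1, hu2⟩ := Prod.mk.injEq .. ▸ hu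
          have hbu : (u.2 : ℕ) / q / 2 ^ (e + 1) = k :=
            Nat.eq_of_mul_eq_mul_left hpe1 (Nat.eq_of_mul_eq_mul_left (by omega) hu2)
          have hj : (u.2 : ℕ) / q / 2 ^ e / 2 = k := by rw [← div_pow_succ]; exact hbu
          have hj2 : (u.2 : ℕ) / q / 2 ^ e = 2 * k ∨ (u.2 : ℕ) / q / 2 ^ e = 2 * k + 1 := by
            omega
          rw [hFi u, hFi ((⟨0, hx0⟩ : Fin (p * q)), (⟨q * K, hKp⟩ : Fin (p * q))),
            labF_mk hq, hKe]
          rcases hj2 with hj2 | hj2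
          · left
            show (0, q * (2 ^ e * ((u.2 : ℕ) / q / 2 ^ e))) = _
            rw [hj2]
          · right
            constructor
            · show (0, q * (2 ^ e * ((u.2 : ℕ) / q / 2 ^ e))) ≠ _
              rw [hj2]
              intro hcon
              obtain ⟨h1, h2⟩ := Prod.mk.injEq .. ▸ hcon
              have := Nat.eq_of_mul_eq_mul_left hpe
                (Nat.eq_of_mul_eq_mul_left (show 0 < q by omega) h2)
              omega
            · set m := 2 ^ e * (2 * k + 1) with hmdef
              have hm1 : 0 < m := by positivity
              have hmb : m ≤ (u.2 : ℕ) / q := by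
                rw [hmdef, ← hj2]
                exact Nat.mul_div_le _ _
              have hqm : q * m ≤ (u.2 : ℕ) := le_trans
                (Nat.mul_le_mul_left q hmb) (Nat.mul_div_le _ _)
              have hqmlt : q * m < p * q := lt_of_le_of_lt hqm (val_lt hp hq u.2)
              have hqm1 : 0 < q * m := by positivity
              have hmsplit : m - 1 = 2 ^ e * (2 * k) + (2 ^ e - 1) := by
                have : m = 2 ^ e * (2 * k) + 2 ^ e := by rw [hmdef, Nat.mul_add, Nat.mul_one]
                omega
              have hmd : (q * m - 1) / q = m - 1 := qm_pred_div (by omega) hm1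
              have hmd2 : (m - 1) / 2 ^ e = 2 * k := by
                rw [hmsplit, Nat.mul_add_div hpe, Nat.div_eq_of_lt (by omega), Nat.add_zero]
              refine ⟨((⟨0, hx0⟩ : Fin (p * q)), (⟨q * m - 1, by omega⟩ : Fin (p * q))),
                ((⟨0, hx0⟩ : Fin (p * q)), (⟨q * m, hqmlt⟩ : Fin (p * q))), ?_, ?_, ?_⟩
              · rw [hFi]
                show (0, q * (2 ^ e * ((q * m - 1) / q / 2 ^ e))) = _
                rw [hmd, hmd2]
              · rw [hFi, labF_mk hq, Nat.mul_div_cancel_left (2 * k + 1) hpe]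
                show _ = (0, q * (2 ^ e * ((u.2 : ℕ) / q / 2 ^ e)))
                rw [hj2]
              · exact grid_adj_y (by simp; omega) rfl
      · -- padding steps : nothing changes, contradiction with hP
        exfalso
        apply hP
        refine ⟨v, ?_⟩
        ext w
        show lab p q (i + 1) w = lab p q (i + 1) v ↔ lab p q i w = lab p q i v
        rw [lab_stable hp hq (by omega) w, lab_stable hp hq (by omega) v]


end Star

section Build

variable (hp : 2 ≤ p) (hq : 2 ≤ q)

include hq in
lemma fib_lab_zero (v : GV p q) : fib (lab p q 0) v = {v} := by
  ext w
  simp only [mem_fib, Set.mem_singleton_iff]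
  rw [lab_zero hq w, lab_zero hq v]
  constructor
  · intro h
    obtain ⟨h1, h2⟩ := Prod.mk.injEq .. ▸ h
    exact Prod.ext (Fin.val_inj.mp h1) (Fin.val_inj.mp h2)
  · rintro rfl; rfl

include hp hq in
lemma lab_top {b : ℕ} (hb : T3 p q ≤ b) (w : GV p q) : lab p q b w = (0, 0) := by
  have hT2 : T2 p q ≤ b := le_trans (by unfold T3; omega) hb
  rw [lab_eq_labF hp hq hT2 w, show min (b - T2 p q) (L p) = L p from by unfold T3 at hb; omega]
  unfold labF
  rw [Nat.div_eq_of_lt (lt_of_lt_of_le (div_lt_p hp hq w.2) (p_le_pow hp hq))]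
  simp

include hp hq in
lemma ncard_con_le (i : ℕ) :
    (PsF (lab p q (i + 1)) \ PsF (lab p q i)).ncard ≤ p * p := by
  have hsub : PsF (lab p q (i + 1)) \ PsF (lab p q i) ⊆
      (fun c : ℕ × ℕ => lab p q (i + 1) ⁻¹' {(q * c.1, q * c.2)}) ''
        ↑(Finset.range p ×ˢ Finset.range p) := by
    rintro P ⟨⟨v, rfl⟩, hnot⟩
    obtain ⟨A, B, hA, hB, hl⟩ := corner_of_new hp hq hnot
    refine ⟨(A, B), by simp [hA, hB], ?_⟩
    show lab p q (i + 1) ⁻¹' {(q * A, q * B)} = fib (lab p q (i + 1)) v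
    rw [fib, hl]
  calc (PsF (lab p q (i + 1)) \ PsF (lab p q i)).ncard
      ≤ ((fun c : ℕ × ℕ => lab p q (i + 1) ⁻¹' {(q * c.1, q * c.2)}) ''
          ↑(Finset.range p ×ˢ Finset.range p)).ncard :=
        Set.ncard_le_ncard hsub ((Finset.range p ×ˢ Finset.range p).finite_toSet.image _)
    _ ≤ (↑(Finset.range p ×ˢ Finset.range p) : Set (ℕ × ℕ)).ncard :=
        Set.ncard_image_le (Finset.range p ×ˢ Finset.range p).finite_toSet
    _ = p * p := by
        rw [Set.ncard_coe_finset, Finset.card_product, Finset.card_range]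

/-- The contraction sequence for the `pq × pq` grid. -/
def theSeq (a b : ℕ) (hb : T3 p q ≤ b) (ha : T3 p q * (p * p) ≤ a) :
    ContractionSeq (theG p q) a b 1 where
  Ps i := PsF (lab p q i)
  con j := PsF (lab p q j) \ PsF (lab p q (j - 1))
  ispart i _ := isPartition_PsF _
  bot := by
    ext P
    constructor
    · rintro ⟨v, rfl⟩
      exact ⟨v, fib_lab_zero hq v⟩
    · rintro ⟨v, rfl⟩
      exact ⟨v, (fib_lab_zero hq v).symm⟩
  top := by
    have h0 : (0 : ℕ) < p * q := hn hp hq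
    ext P
    simp only [Set.mem_singleton_iff]
    constructor
    · rintro ⟨v, rfl⟩
      apply Set.eq_univ_of_forall
      intro w
      show lab p q b w = lab p q b v
      rw [lab_top hp hq hb w, lab_top hp hq hb v]
    · rintro rfl
      refine ⟨((⟨0, h0⟩ : Fin (p * q)), (⟨0, h0⟩ : Fin (p * q))), ?_⟩
      symm
      apply Set.eq_univ_of_forall
      intro w
      show lab p q b w = _
      rw [lab_top hp hq hb w, lab_top hp hq hb]
  refines := by
    rintro i _ P ⟨v, rfl⟩
    exact ⟨fib (lab p q (i + 1)) v, ⟨v, rfl⟩,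
      fun w hw => coarsen hp hq hw⟩
  con_sub := fun i _ => Set.diff_subset
  old_parts := by
    intro i _ P hP hnc
    by_contra hcon
    exact hnc ⟨hP, by simpa using hcon⟩
  contracted := by
    intro i _ P hP
    obtain ⟨⟨v, rfl⟩, hnot⟩ := hP
    have hnot : fib (lab p q (i + 1)) v ∉ PsF (lab p q i) := hnot
    obtain ⟨u₀, hu₀, hstar⟩ := star hp hq hnot
    have hsub0 : fib (lab p q i) u₀ ⊆ fib (lab p q (i + 1)) v := by
      intro w hw
      exact (coarsen hp hq hw).trans hu₀
    refine ⟨fib (lab p q i) u₀, ⟨⟨u₀, rfl⟩, hsub0⟩, ?_⟩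
    rintro D ⟨⟨u, rfl⟩, hsub⟩
    have hu : lab p q (i + 1) u = lab p q (i + 1) v := hsub (self_mem_fib _ u)
    rcases hstar u hu with heq | ⟨hne, w, w', hw, hw', hadj⟩
    · apply exists_walk_of_eq_or_adj
      left
      exact Subtype.ext (fib_eq_of heq).symm
    · apply exists_walk_of_eq_or_adj
      right
      refine ⟨?_, w, hw, w', hw', hadj⟩
      intro hcon
      exact hne (fib_eq_iff.mp (congrArg Subtype.val hcon)).symm
  count := by
    classical
    have hterm : ∀ i ∈ Finset.range b,
        (PsF (lab p q (i + 1)) \ PsF (lab p q (i + 1 - 1))).ncard ≤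
          (if T3 p q ≤ i then 0 else p * p) := by
      intro i _
      rw [Nat.add_sub_cancel]
      split
      · next hT =>
        have hfun : lab p q (i + 1) = lab p q i := funext (lab_stable hp hq hT)
        rw [hfun]
        simp
      · next hT =>
        exact ncard_con_le hp hq i
    calc ∑ i ∈ Finset.range b, (PsF (lab p q (i + 1)) \ PsF (lab p q (i + 1 - 1))).ncard
        ≤ ∑ i ∈ Finset.range b, (if T3 p q ≤ i then 0 else p * p) :=
          Finset.sum_le_sum hterm
      _ = ∑ i ∈ (Finset.range b).filter (fun i => T3 p q ≤ i), 0 +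
            ∑ _i ∈ (Finset.range b).filter (fun i => ¬ T3 p q ≤ i), (p * p) :=
          Finset.sum_ite _ _
      _ = ((Finset.range b).filter (fun i => ¬ T3 p q ≤ i)).card * (p * p) := by
          rw [Finset.sum_const_zero, Finset.sum_const, smul_eq_mul, zero_add]
      _ ≤ T3 p q * (p * p) := by
          apply Nat.mul_le_mul_right
          calc ((Finset.range b).filter (fun i => ¬ T3 p q ≤ i)).card
              ≤ (Finset.range (T3 p q)).card := by
                apply Finset.card_le_card
                intro x hx
                simp only [Finset.mem_filter, Finset.mem_range] at hx ⊢
                omega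
            _ = T3 p q := Finset.card_range _
      _ ≤ a := ha

end Build

section Numeric

lemma one_le_logb (hp : 2 ≤ p) : 1 ≤ Real.logb 2 p := by
  have h := Real.logb_le_logb_of_le (b := 2) (by norm_num) (by norm_num : (0:ℝ) < 2)
    (show (2:ℝ) ≤ p by exact_mod_cast hp)
  rwa [Real.logb_self_eq_one (by norm_num)] at h

lemma clog_le_logb (hp : 2 ≤ p) : (Nat.clog 2 p : ℝ) ≤ Real.logb 2 p + 1 := by
  have hc : 1 ≤ Nat.clog 2 p := Nat.clog_pos (by norm_num) (by omega)
  have h : 2 ^ (Nat.clog 2 p - 1) < p := Nat.pow_pred_clog_lt_self (by norm_num) (by omega)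
  have h2 : ((2:ℝ)) ^ (Nat.clog 2 p - 1) ≤ (p : ℝ) := by exact_mod_cast h.le
  have h3 : ((Nat.clog 2 p - 1 : ℕ) : ℝ) ≤ Real.logb 2 p := by
    calc ((Nat.clog 2 p - 1 : ℕ) : ℝ)
        = Real.logb 2 ((2:ℝ) ^ (Nat.clog 2 p - 1)) := by
          rw [Real.logb_pow, Real.logb_self_eq_one (by norm_num), mul_one]
      _ ≤ Real.logb 2 p := Real.logb_le_logb_of_le (by norm_num) (by positivity) h2
  have h4 : ((Nat.clog 2 p - 1 : ℕ) : ℝ) = (Nat.clog 2 p : ℝ) - 1 := by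
    push_cast [hc]
    ring
  rw [h4] at h3
  linarith

end Numeric

end S14


/-- There is a universal constant `c` such that for all integers
`p, q ≥ 2`, the `pq × pq` grid graph (box product of two paths on `p·q` vertices)
admits a `(⌈c·p²·(q + log₂ p)⌉, ⌈c·(q + log₂ p)⌉, 1)`-contraction sequence. -/
theorem statement_14 :
    ∃ c : ℝ, 0 < c ∧
      ∀ p q : ℕ, 2 ≤ p → 2 ≤ q →
        Nonempty (ContractionSeq
          (SimpleGraph.boxProd (SimpleGraph.pathGraph (p * q)) (SimpleGraph.pathGraph (p * q)))
          ⌈c * (p : ℝ) ^ 2 * ((q : ℝ) + Real.logb 2 p)⌉₊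
          ⌈c * ((q : ℝ) + Real.logb 2 p)⌉₊ 1) := by
  refine ⟨10, by norm_num, fun p q hp hq => ?_⟩
  have hq2 : (2:ℝ) ≤ (q:ℝ) := by exact_mod_cast hq
  have hlogb : 1 ≤ Real.logb 2 p := S14.one_le_logb hp
  have hclog : (Nat.clog 2 p : ℝ) ≤ Real.logb 2 p + 1 := S14.clog_le_logb hp
  have hT3n : S14.T3 p q = 2 * q - 2 + Nat.clog 2 p + Nat.clog 2 p := rfl
  have h2q : ((2 * q - 2 : ℕ) : ℝ) = 2 * (q:ℝ) - 2 := by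
    have h22 : (2:ℕ) ≤ 2 * q := by omega
    push_cast [h22]
    ring
  have hcast : ((S14.T3 p q : ℕ) : ℝ)
      = 2 * (q:ℝ) - 2 + (Nat.clog 2 p : ℝ) + (Nat.clog 2 p : ℝ) := by
    rw [hT3n]
    push_cast [h2q]
    ring
  have hT3R : ((S14.T3 p q : ℕ) : ℝ) ≤ 10 * ((q:ℝ) + Real.logb 2 p) := by
    rw [hcast]
    nlinarith
  have hb : S14.T3 p q ≤ ⌈(10:ℝ) * ((q:ℝ) + Real.logb 2 p)⌉₊ := by
    have h := Nat.ceil_mono hT3R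
    rwa [Nat.ceil_natCast] at h
  have ha : S14.T3 p q * (p * p) ≤ ⌈(10:ℝ) * (p:ℝ) ^ 2 * ((q:ℝ) + Real.logb 2 p)⌉₊ := by
    have hR : ((S14.T3 p q * (p * p) : ℕ) : ℝ) ≤ 10 * (p:ℝ) ^ 2 * ((q:ℝ) + Real.logb 2 p) := by
      push_cast
      calc (S14.T3 p q : ℝ) * ((p:ℝ) * (p:ℝ))
          ≤ (10 * ((q:ℝ) + Real.logb 2 p)) * ((p:ℝ) * (p:ℝ)) :=
            mul_le_mul_of_nonneg_right hT3R (by positivity)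
        _ = 10 * (p:ℝ) ^ 2 * ((q:ℝ) + Real.logb 2 p) := by ring
    have h := Nat.ceil_mono hR
    rwa [Nat.ceil_natCast] at h
  exact ⟨S14.theSeq hp hq _ _ hb ha⟩


end Paper
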